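/- Let R = ℤ[y_1, ..., y_m]/(g_1, ..., g_m) where g_k = y_k ∏_{j=1}^{n_k}(∑_i a^k_{ij} y_i) with integer coefficients a^k_{ij} and a^k_{kj} = 1 for all j. Fix an index r and let g_k' denote g_k with y_r set to 0. Then the natural surjection ℤ[y_1,...,ŷ_r,...,y_m]/(g_1',...,ĝ_r',...,g_m') → R/(y_r) is an isomorphism. -/

import Mathlib

open MvPolynomial

/-- Lemma 7.5 ("restr"): with R = ℤ[y_1,...,y_m]/(g_1,...,g_m), where
g_k = y_k ∏_{j=1}^{n_k}(∑_i a^k_{ij} y_i) and a^k_{kj} = 1, and with g_k'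
denoting g_k with y_r set to 0, the natural surjection
ℤ[y_1,...,ŷ_r,...,y_m]/(g_1',...,ĝ_r',...,g_m') → R/(y_r) is an isomorphism. -/
theorem stmt_19 (m : ℕ) (n : Fin m → ℕ) (hn : ∀ k, 1 ≤ n k)
    (a : (k : Fin m) → Fin m → Fin (n k) → ℤ)
    (ha : ∀ k j, a k k j = 1)
    (r : Fin m)
    (ψ : MvPolynomial (Fin m) ℤ →ₐ[ℤ] MvPolynomial {i : Fin m // i ≠ r} ℤ)
    (hψ : ψ = aeval fun i : Fin m =>
      if h : i = r then 0 else X (⟨i, h⟩ : {i : Fin m // i ≠ r}))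
    (g : Fin m → MvPolynomial (Fin m) ℤ)
    (hg : ∀ k, g k = X k * ∏ j : Fin (n k), ∑ i : Fin m, C (a k i j) * X i)
    (I : Ideal (MvPolynomial (Fin m) ℤ))
    (hI : I = Ideal.span ({p | ∃ k : Fin m, p = g k} ∪ {X r}))
    (I' : Ideal (MvPolynomial {i : Fin m // i ≠ r} ℤ))
    (hI' : I' = Ideal.span {p | ∃ k : Fin m, k ≠ r ∧ p = ψ (g k)}) :
    ∃ e : (MvPolynomial {i : Fin m // i ≠ r} ℤ ⧸ I') ≃+*
        (MvPolynomial (Fin m) ℤ ⧸ I),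
      ∀ i : {i : Fin m // i ≠ r},
        e (Ideal.Quotient.mk I' (X i)) = Ideal.Quotient.mk I (X i.1) := by
  -- membership facts
  have hXrI : (X r : MvPolynomial (Fin m) ℤ) ∈ I := by
    rw [hI]; exact Ideal.subset_span (Or.inr rfl)
  have hgI : ∀ k, g k ∈ I := fun k => by
    rw [hI]; exact Ideal.subset_span (Or.inl ⟨k, rfl⟩)
  have hψgI' : ∀ k, ψ (g k) ∈ I' := by
    intro k
    by_cases hk : k = r
    · have : ψ (g k) = 0 := by
        subst hk
        rw [hg k, map_mul, hψ, aeval_X, dif_pos rfl, zero_mul]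
      rw [this]; exact I'.zero_mem
    · rw [hI']; exact Ideal.subset_span ⟨k, hk, rfl⟩
  -- the forward algebra map
  set φ : MvPolynomial {i : Fin m // i ≠ r} ℤ →ₐ[ℤ] MvPolynomial (Fin m) ℤ ⧸ I :=
    aeval (fun i => Ideal.Quotient.mk I (X i.1)) with hφ
  -- the backward algebra map
  set σ : MvPolynomial (Fin m) ℤ →ₐ[ℤ] MvPolynomial {i : Fin m // i ≠ r} ℤ ⧸ I' :=
    aeval (fun i : Fin m =>
      if h : i = r then 0 else Ideal.Quotient.mk I' (X ⟨i, h⟩)) with hσ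
  -- σ = mk I' ∘ ψ
  have hσψ : σ = (Ideal.Quotient.mkₐ ℤ I').comp ψ := by
    apply MvPolynomial.algHom_ext
    intro i
    simp only [hσ, aeval_X, AlgHom.comp_apply, hψ]
    by_cases h : i = r
    · simp [h]
    · simp [h]
  -- φ ∘ ψ = mk I
  have hφψ : φ.comp ψ = Ideal.Quotient.mkₐ ℤ I := by
    apply MvPolynomial.algHom_ext
    intro i
    simp only [AlgHom.comp_apply, hψ, aeval_X]
    by_cases h : i = r
    · subst h
      simp [(Ideal.Quotient.eq_zero_iff_mem).2 hXrI]
    · simp [h, hφ]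
  -- φ kills I'
  have hφI' : ∀ p ∈ I', φ p = 0 := by
    intro p hp
    rw [hI'] at hp
    refine Submodule.span_induction ?_ ?_ ?_ ?_ hp
    · rintro q ⟨k, -, rfl⟩
      have := congrArg (fun f : MvPolynomial (Fin m) ℤ →ₐ[ℤ] _ => f (g k)) hφψ
      simp only [AlgHom.comp_apply, Ideal.Quotient.mkₐ_eq_mk] at this
      rw [this, Ideal.Quotient.eq_zero_iff_mem]
      exact hgI k
    · simp
    · intro x y _ _ hx hy; rw [map_add, hx, hy, add_zero]
    · intro x y _ hy; rw [smul_eq_mul, map_mul, hy, mul_zero]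
  -- σ kills I
  have hσI : ∀ p ∈ I, σ p = 0 := by
    intro p hp
    rw [hI] at hp
    refine Submodule.span_induction ?_ ?_ ?_ ?_ hp
    · rintro q (⟨k, rfl⟩ | hq)
      · rw [hσψ]
        simp only [AlgHom.comp_apply, Ideal.Quotient.mkₐ_eq_mk]
        exact (Ideal.Quotient.eq_zero_iff_mem).2 (hψgI' k)
      · rcases hq with rfl
        simp [hσ]
    · simp
    · intro x y _ _ hx hy; rw [map_add, hx, hy, add_zero]
    · intro x y _ hy; rw [smul_eq_mul, map_mul, hy, mul_zero]
  -- the lifted ring homs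
  set F : (MvPolynomial {i : Fin m // i ≠ r} ℤ ⧸ I') →+* (MvPolynomial (Fin m) ℤ ⧸ I) :=
    Ideal.Quotient.lift I' φ.toRingHom hφI' with hF
  set G : (MvPolynomial (Fin m) ℤ ⧸ I) →+* (MvPolynomial {i : Fin m // i ≠ r} ℤ ⧸ I') :=
    Ideal.Quotient.lift I σ.toRingHom hσI with hG
  have hFmk : ∀ p, F (Ideal.Quotient.mk I' p) = φ p := fun p => rfl
  have hGmk : ∀ p, G (Ideal.Quotient.mk I p) = σ p := fun p => rfl
  -- G ∘ φ = mk I'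
  have hGφ : G.toIntAlgHom.comp φ = Ideal.Quotient.mkₐ ℤ I' := by
    apply MvPolynomial.algHom_ext
    intro i
    show G (φ (X i)) = Ideal.Quotient.mk I' (X i)
    simp only [AlgHom.comp_apply, RingHom.toIntAlgHom_apply, hφ, aeval_X,
      Ideal.Quotient.mkₐ_eq_mk]
    rw [hGmk]
    simp [hσ, i.2]
  -- F ∘ σ = mk I
  have hFσ : F.toIntAlgHom.comp σ = Ideal.Quotient.mkₐ ℤ I := by
    apply MvPolynomial.algHom_ext
    intro i
    show F (σ (X i)) = Ideal.Quotient.mk I (X i)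
    simp only [AlgHom.comp_apply, RingHom.toIntAlgHom_apply, hσ, aeval_X,
      Ideal.Quotient.mkₐ_eq_mk]
    by_cases h : i = r
    · subst h
      simp [(Ideal.Quotient.eq_zero_iff_mem).2 hXrI]
    · rw [dif_neg h, hFmk]
      simp [hφ]
  refine ⟨{ toFun := F, invFun := G,
            left_inv := ?_, right_inv := ?_,
            map_mul' := F.map_mul, map_add' := F.map_add }, ?_⟩
  · intro x
    obtain ⟨p, rfl⟩ := Ideal.Quotient.mk_surjective x
    have := congrArg (fun f : MvPolynomial {i : Fin m // i ≠ r} ℤ →ₐ[ℤ] _ => f p) hGφ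
    exact this
  · intro x
    obtain ⟨p, rfl⟩ := Ideal.Quotient.mk_surjective x
    have := congrArg (fun f : MvPolynomial (Fin m) ℤ →ₐ[ℤ] _ => f p) hFσ
    exact this
  · intro i
    show F (Ideal.Quotient.mk I' (X i)) = _
    rw [hFmk]
    simp [hφ]
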